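/- arXiv:1606.07052 — 5 statements merged into one kernel-verified Lean document; each statement's English description precedes it below -/
import Mathlib

section
/- Let τ, γ ∈ ℂ and let G = {τ + tγ/2 : t ∈ [−1,1]} ⊂ ℂ. Then for every λ ∈ ℂ \ G one has (τ − λ) ≠ 0 and 1 − γ²/(4(τ−λ)²) ∉ (−∞, 0], so that the standard root w(λ) = (τ − λ)·√⁺(1 − γ²/(4(τ−λ)²)) is well defined on ℂ \ G; moreover w is holomorphic on the open set ℂ \ G. -/
/-- The gap `G = {τ + tγ/2 : t ∈ [−1,1]} ⊂ ℂ`. -/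
def gap (τ γ : ℂ) : Set ℂ :=
  {z : ℂ | ∃ t : ℝ, t ∈ Set.Icc (-1 : ℝ) 1 ∧ z = τ + (t : ℂ) * γ / 2}

/-- The standard root `w(λ) = (τ − λ) √⁺(1 − γ²/(4(τ−λ)²))`, where `√⁺` is the principal
branch of the square root (given by the principal complex power `z ^ (1/2)`). -/
noncomputable def stdRoot (τ γ lam : ℂ) : ℂ :=
  (τ - lam) * (1 - γ ^ 2 / (4 * (τ - lam) ^ 2)) ^ ((1 : ℂ) / 2)

/-- The negative real ray `(−∞, 0]` viewed as a subset of `ℂ`. -/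
def negRay : Set ℂ := {z : ℂ | ∃ x : ℝ, x ≤ 0 ∧ z = (x : ℂ)}

lemma not_negRay_mem_slitPlane {z : ℂ} (h : z ∉ negRay) : z ∈ Complex.slitPlane := by
  rw [Complex.mem_slitPlane_iff]
  by_contra hc
  push_neg at hc
  exact h ⟨z.re, hc.1, (Complex.ext rfl (by simp [hc.2]))⟩

lemma key_lemma (τ γ : ℂ) : ∀ lam : ℂ, lam ∉ gap τ γ →
    τ - lam ≠ 0 ∧ (1 - γ ^ 2 / (4 * (τ - lam) ^ 2)) ∉ negRay := by
  intro lam hlam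
  have hne : τ - lam ≠ 0 := by
    intro h
    apply hlam
    refine ⟨0, ⟨by norm_num, by norm_num⟩, ?_⟩
    have : lam = τ := by linear_combination -h
    simp [this]
  refine ⟨hne, ?_⟩
  rintro ⟨x, hx, hz⟩
  set u := τ - lam with hu
  have h4 : (4 : ℂ) * u ^ 2 ≠ 0 := by
    simp [hne, pow_eq_zero_iff]
  have hγ2 : γ ^ 2 = 4 * u ^ 2 * (1 - (x : ℂ)) := by
    field_simp at hz
    linear_combination -hz
  set s : ℝ := Real.sqrt (1 - x) with hs
  have hs1 : (1 : ℝ) ≤ s := by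
    have := Real.sqrt_le_sqrt (show (1:ℝ) ≤ 1 - x by linarith)
    simpa [hs] using this
  have hs0 : (0 : ℝ) < s := lt_of_lt_of_le one_pos hs1
  have hssq : ((s : ℂ)) ^ 2 = 1 - (x : ℂ) := by
    have : s ^ 2 = 1 - x := Real.sq_sqrt (by linarith)
    exact_mod_cast congrArg Complex.ofReal this
  have hγ2' : γ ^ 2 = (2 * u * s) ^ 2 := by
    rw [hγ2, ← hssq]; ring
  have hcases : γ = 2 * u * s ∨ γ = -(2 * u * s) := sq_eq_sq_iff_eq_or_eq_neg.mp hγ2'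
  have hscne : (s : ℂ) ≠ 0 := by exact_mod_cast hs0.ne'
  rcases hcases with h | h
  · apply hlam
    have hinv : 1/s ≤ 1 := by rw [div_le_one hs0]; exact hs1
    have hinv0 : 0 < 1/s := by positivity
    refine ⟨-1/s, ⟨by rw [neg_div]; linarith, by rw [neg_div]; linarith⟩, ?_⟩
    push_cast
    rw [h]
    field_simp [hu]
    ring
  · apply hlam
    have hinv : 1/s ≤ 1 := by rw [div_le_one hs0]; exact hs1
    have hinv0 : 0 < 1/s := by positivity
    refine ⟨1/s, ⟨by linarith, hinv⟩, ?_⟩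
    push_cast
    rw [h]
    field_simp [hu]
    ring

/-- For every `λ ∈ ℂ \ G` one has `τ − λ ≠ 0` and `1 − γ²/(4(τ−λ)²) ∉ (−∞,0]`, so the
standard root `w(λ) = (τ−λ)·√⁺(1 − γ²/(4(τ−λ)²))` is well defined on `ℂ \ G`; moreover
`ℂ \ G` is open and `w` is holomorphic on it. -/
theorem stdRoot_welldefined_holomorphic (τ γ : ℂ) :
    (∀ lam : ℂ, lam ∉ gap τ γ →
      τ - lam ≠ 0 ∧ (1 - γ ^ 2 / (4 * (τ - lam) ^ 2)) ∉ negRay) ∧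
    IsOpen (gap τ γ)ᶜ ∧
    DifferentiableOn ℂ (stdRoot τ γ) (gap τ γ)ᶜ := by
  have hgap : gap τ γ = (fun t : ℝ => τ + (t : ℂ) * γ / 2) '' Set.Icc (-1 : ℝ) 1 := by
    ext z
    simp [gap, Set.mem_image, eq_comm]
  have hopen : IsOpen (gap τ γ)ᶜ := by
    rw [hgap]
    exact (isCompact_Icc.image (by continuity)).isClosed.isOpen_compl
  refine ⟨key_lemma τ γ, hopen, ?_⟩
  intro lam hlam
  obtain ⟨hne, hray⟩ := key_lemma τ γ lam hlam
  have h4 : (4 : ℂ) * (τ - lam) ^ 2 ≠ 0 := by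
    simp [hne, pow_eq_zero_iff]
  have hf : DifferentiableAt ℂ (fun z : ℂ => 1 - γ ^ 2 / (4 * (τ - z) ^ 2)) lam := by
    apply DifferentiableAt.sub (differentiableAt_const _)
    exact DifferentiableAt.div (differentiableAt_const _) (by fun_prop) h4
  have hd : DifferentiableAt ℂ (stdRoot τ γ) lam := by
    unfold stdRoot
    apply DifferentiableAt.mul (by fun_prop)
    exact DifferentiableAt.cpow hf (differentiableAt_const _) (not_negRay_mem_slitPlane hray)
  exact hd.differentiableWithinAt
end

section
/- Let τ, γ ∈ ℂ and G = {τ + tγ/2 : t ∈ [−1,1]}. Then the standard root w(λ) = (τ−λ)·√⁺(1 − γ²/(4(τ−λ)²)) is differentiable on ℂ \ G with derivative w′(λ) = −(τ − λ)/w(λ) for every λ ∈ ℂ \ G. -/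
/-- The standard root is differentiable off the gap `G`, with derivative
`w′(λ) = −(τ − λ)/w(λ)` at every `λ ∈ ℂ \ G`. -/
theorem stdRoot_hasDerivAt (τ γ lam : ℂ) (h : lam ∉ gap τ γ) :
    HasDerivAt (stdRoot τ γ) (-(τ - lam) / stdRoot τ γ lam) lam := by
  have hf : τ - lam ≠ 0 := by
    intro h0
    exact h ⟨0, ⟨by norm_num, by norm_num⟩, by
      push_cast
      rw [zero_mul, zero_div, add_zero]
      linear_combination -h0⟩
  set u : ℂ := 1 - γ ^ 2 / (4 * (τ - lam) ^ 2) with hu_def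
  have hu_slit : u ∈ Complex.slitPlane := by
    by_contra hns
    rw [Complex.mem_slitPlane_iff] at hns
    push_neg at hns
    obtain ⟨hre, him⟩ := hns
    set c : ℂ := γ / (2 * (τ - lam)) with hc_def
    have h2f : (2 : ℂ) * (τ - lam) ≠ 0 := by
      simp [hf]
    have hc2 : c ^ 2 = 1 - u := by
      rw [hc_def, hu_def]
      field_simp
      ring
    have hc2im : (c ^ 2).im = 0 := by rw [hc2]; simp [him]
    have hc2re : 1 ≤ (c ^ 2).re := by rw [hc2]; simp; linarith
    have him0 : c.im = 0 := by
      rcases mul_eq_zero.mp (by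
        have : (c ^ 2).im = 2 * (c.re * c.im) := by
          simp [pow_two, Complex.mul_im]; ring
        have h2 : 2 * (c.re * c.im) = 0 := by rw [← this]; exact hc2im
        rcases mul_eq_zero.mp h2 with h | h
        · norm_num at h
        · exact h) with h | h
      · exfalso
        have : (c ^ 2).re = c.re * c.re - c.im * c.im := by
          simp [pow_two, Complex.mul_re]
        rw [h] at this
        nlinarith [sq_nonneg c.im]
      · exact h
    have hcre : (c ^ 2).re = c.re ^ 2 := by
      simp [pow_two, Complex.mul_re, him0]
    have h1le : 1 ≤ c.re ^ 2 := hcre ▸ hc2re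
    have hcre0 : c.re ≠ 0 := by intro h0; rw [h0] at h1le; norm_num at h1le
    apply h
    have habs : 1 ≤ |c.re| := by nlinarith [sq_abs c.re, abs_nonneg c.re]
    have hpos : 0 < |c.re| := lt_of_lt_of_le one_pos habs
    have hbnd : |(-1) / c.re| ≤ 1 := by
      rw [abs_div, abs_neg, abs_one]
      exact (div_le_one hpos).mpr habs
    have hcc : c = (c.re : ℂ) := by
      apply Complex.ext <;> simp [him0]
    have hγ : γ = c * (2 * (τ - lam)) := by
      rw [hc_def]; field_simp
    refine ⟨-1 / c.re, abs_le.mp hbnd, ?_⟩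
    have hkey : ((-1 / c.re : ℝ) : ℂ) * γ / 2 = -(τ - lam) := by
      rw [hγ, hcc]
      push_cast
      have hcreC : (c.re : ℂ) ≠ 0 := Complex.ofReal_ne_zero.mpr hcre0
      field_simp
      simp [hcreC]
    rw [hkey]
    ring
  have hu0 : u ≠ 0 := Complex.slitPlane_ne_zero hu_slit
  have hs0 : u ^ ((1 : ℂ) / 2) ≠ 0 := by
    simp [Complex.cpow_eq_zero_iff, hu0]
  have hsq : u ^ ((1 : ℂ) / 2) * u ^ ((1 : ℂ) / 2) = u := by
    rw [← Complex.cpow_add _ _ hu0]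
    norm_num
  have hD0 : (4 : ℂ) * (τ - lam) ^ 2 ≠ 0 := by
    simp [hf]
  -- derivative of τ - x
  have hd1 : HasDerivAt (fun x : ℂ => τ - x) (-1) lam := by
    simpa using (hasDerivAt_id lam).const_sub τ
  -- derivative of 4(τ-x)^2
  have hd2 : HasDerivAt (fun x : ℂ => 4 * (τ - x) ^ 2)
      (4 * ((2 : ℕ) * (τ - lam) ^ 1 * (-1))) lam := (hd1.pow 2).const_mul 4
  -- derivative of γ²/(4(τ-x)²)
  have hd3 : HasDerivAt (fun x : ℂ => γ ^ 2 / (4 * (τ - x) ^ 2))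
      ((0 * (4 * (τ - lam) ^ 2) - γ ^ 2 * (4 * ((2 : ℕ) * (τ - lam) ^ 1 * (-1)))) /
        (4 * (τ - lam) ^ 2) ^ 2) lam :=
    (hasDerivAt_const lam (γ ^ 2)).div hd2 hD0
  -- derivative of u(x)
  have hd4 : HasDerivAt (fun x : ℂ => 1 - γ ^ 2 / (4 * (τ - x) ^ 2))
      (-((0 * (4 * (τ - lam) ^ 2) - γ ^ 2 * (4 * ((2 : ℕ) * (τ - lam) ^ 1 * (-1)))) /
        (4 * (τ - lam) ^ 2) ^ 2)) lam := hd3.const_sub 1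
  -- derivative of u(x)^(1/2)
  have hd5 : HasDerivAt (fun x : ℂ => (1 - γ ^ 2 / (4 * (τ - x) ^ 2)) ^ ((1 : ℂ) / 2))
      (((1 : ℂ) / 2) * u ^ ((1 : ℂ) / 2 - 1) *
        (-((0 * (4 * (τ - lam) ^ 2) - γ ^ 2 * (4 * ((2 : ℕ) * (τ - lam) ^ 1 * (-1)))) /
          (4 * (τ - lam) ^ 2) ^ 2))) lam := hd4.cpow_const hu_slit
  have hd6 := hd1.mul hd5
  have hder : HasDerivAt (stdRoot τ γ)
      ((-1) * u ^ ((1 : ℂ) / 2) + (τ - lam) *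
        (((1 : ℂ) / 2) * u ^ ((1 : ℂ) / 2 - 1) *
          (-((0 * (4 * (τ - lam) ^ 2) - γ ^ 2 * (4 * ((2 : ℕ) * (τ - lam) ^ 1 * (-1)))) /
            (4 * (τ - lam) ^ 2) ^ 2)))) lam := by
    convert hd6 using 1 <;> rfl
  convert hder using 1
  have hhalf : ((1 : ℂ) / 2 - 1) = -((1 : ℂ) / 2) := by norm_num
  rw [hhalf, Complex.cpow_neg]
  rw [stdRoot, ← hu_def]
  have hE : -((0 * (4 * (τ - lam) ^ 2) - γ ^ 2 * (4 * ((2 : ℕ) * (τ - lam) ^ 1 * (-1)))) /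
      (4 * (τ - lam) ^ 2) ^ 2) = -(γ ^ 2) / (2 * (τ - lam) ^ 3) := by
    field_simp
    ring
  rw [hE]
  have key : 4 * (τ - lam) ^ 2 * (u ^ ((1 : ℂ) / 2) * u ^ ((1 : ℂ) / 2))
      = 4 * (τ - lam) ^ 2 - γ ^ 2 := by
    rw [hsq, hu_def]
    field_simp
  clear_value u
  generalize hgen : u ^ ((1 : ℂ) / 2) = sq at key hs0 ⊢
  field_simp
  linear_combination key
end

section
/- Let τ ∈ ℂ and γ ∈ ℂ with γ ≠ 0, and let w(λ) = (τ−λ)·√⁺(1 − γ²/(4(τ−λ)²)) be the standard root, defined off the gap G = {τ + tγ/2 : t ∈ [−1,1]}. Then for every t ∈ (−1,1): lim_{ε→0⁺} w(τ + (t + iε)·γ/2) = −i·(γ/2)·√(1 − t²) and lim_{ε→0⁺} w(τ + (t − iε)·γ/2) = +i·(γ/2)·√(1 − t²). In particular, the boundary values of w on the two sides of the gap G are negatives of each other. -/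
open Complex Filter Set



lemma half_sq {c : ℂ} (hc : c ≠ 0) : (c ^ ((1:ℂ)/2)) ^ 2 = c := by
  rw [pow_two, ← Complex.cpow_add _ _ hc]
  norm_num

lemma sq_im' (z : ℂ) : (z ^ 2).im = 2 * z.re * z.im := by
  rw [pow_two, Complex.mul_im]; ring

lemma sq_re' (z : ℂ) : (z ^ 2).re = z.re ^ 2 - z.im ^ 2 := by
  rw [pow_two, Complex.mul_re]; ring

lemma sq_ne_one' {z : ℂ} (hz : 0 < z.im) : z ^ 2 ≠ 1 := by
  intro h
  have h2 : (z - 1) * (z + 1) = 0 := by linear_combination h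
  rcases mul_eq_zero.mp h2 with h3 | h3
  · rw [sub_eq_zero] at h3; rw [h3] at hz; simp at hz
  · have h4 : z = -1 := by linear_combination h3
    rw [h4] at hz; simp at hz

lemma slit1 {z : ℂ} (hz : 0 < z.im) : (1 - z ^ 2) ∈ Complex.slitPlane := by
  rcases eq_or_ne z.re 0 with hx | hx
  · left
    rw [Complex.sub_re, Complex.one_re, sq_re', hx]
    nlinarith
  · right
    rw [Complex.sub_im, Complex.one_im, sq_im']
    intro h
    have h5 : 2 * z.re * z.im = 0 := by linarith
    rcases mul_eq_zero.mp h5 with h3 | h3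
    · rcases mul_eq_zero.mp h3 with h4 | h4
      · norm_num at h4
      · exact hx h4
    · linarith

lemma slit2 {z : ℂ} (hz : 0 < z.im) : (1 - 1 / z ^ 2) ∈ Complex.slitPlane := by
  have hz0 : z ≠ 0 := by intro h; rw [h] at hz; simp at hz
  have hns : 0 < Complex.normSq (z ^ 2) := by
    rw [Complex.normSq_pos]; exact pow_ne_zero 2 hz0
  rcases eq_or_ne z.re 0 with hx | hx
  · left
    rw [Complex.sub_re, Complex.one_re, one_div, Complex.inv_re, sq_re', hx]
    have hq : ((0:ℝ) ^ 2 - z.im ^ 2) / Complex.normSq (z ^ 2) ≤ 0 :=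
      div_nonpos_of_nonpos_of_nonneg (by nlinarith) hns.le
    linarith
  · right
    rw [Complex.sub_im, Complex.one_im, one_div, Complex.inv_im, sq_im']
    intro h
    have h5 : 2 * z.re * z.im = 0 := by
      have hdiv : (2 * z.re * z.im) / Complex.normSq (z ^ 2) = 0 := by rw [zero_sub, neg_div, neg_neg] at h; exact h
      rcases div_eq_zero_iff.mp hdiv with h | h
      · exact h
      · exact absurd h hns.ne'
    rcases mul_eq_zero.mp h5 with h8 | h8
    · rcases mul_eq_zero.mp h8 with h9 | h9
      · norm_num at h9
      · exact hx h9
    · linarith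

lemma one_sub_inv_sq_ne_zero {z : ℂ} (hz : 0 < z.im) : (1 - 1 / z ^ 2) ≠ 0 := by
  have hz0 : z ≠ 0 := by intro h; rw [h] at hz; simp at hz
  intro h
  apply sq_ne_one' hz
  have h2 : z ^ 2 ≠ 0 := pow_ne_zero 2 hz0
  field_simp at h
  linear_combination h

lemma key_identity {z : ℂ} (hz : 0 < z.im) :
    z * (1 - 1 / z ^ 2) ^ ((1:ℂ)/2) = Complex.I * (1 - z ^ 2) ^ ((1:ℂ)/2) := by
  set U : Set ℂ := {w : ℂ | 0 < w.im} with hU_def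
  set f : ℂ → ℂ := fun w => w * (1 - 1 / w ^ 2) ^ ((1:ℂ)/2) with hf_def
  set g : ℂ → ℂ := fun w => Complex.I * (1 - w ^ 2) ^ ((1:ℂ)/2) with hg_def
  have hUopen : IsOpen U := by
    exact isOpen_lt continuous_const Complex.continuous_im
  have hfc : ContinuousOn f U := by
    intro w hw
    have hw' : 0 < w.im := hw
    have hw0 : w ≠ 0 := by intro h; rw [h] at hw'; simp at hw'
    apply ContinuousAt.continuousWithinAt
    have h1 : ContinuousAt (fun w : ℂ => 1 - 1 / w ^ 2) w :=
      continuousAt_const.sub (continuousAt_const.div (continuousAt_pow w 2) (pow_ne_zero 2 hw0))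
    have h2 : ContinuousAt (fun w : ℂ => (1 - 1 / w ^ 2) ^ ((1:ℂ)/2)) w :=
      ContinuousAt.cpow h1 continuousAt_const (slit2 hw')
    exact continuousAt_id.mul h2
  have hgc : ContinuousOn g U := by
    intro w hw
    have hw' : 0 < w.im := hw
    apply ContinuousAt.continuousWithinAt
    have h1 : ContinuousAt (fun w : ℂ => 1 - w ^ 2) w :=
      continuousAt_const.sub (continuousAt_pow w 2)
    have h2 : ContinuousAt (fun w : ℂ => (1 - w ^ 2) ^ ((1:ℂ)/2)) w :=
      ContinuousAt.cpow h1 continuousAt_const (slit1 hw')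
    exact continuousAt_const.mul h2
  have hsq : ∀ w ∈ U, f w ^ 2 = g w ^ 2 := by
    intro w hw
    have hw' : 0 < w.im := hw
    have hw0 : w ≠ 0 := by intro h; rw [h] at hw'; simp at hw'
    have h1 : (1 - 1 / w ^ 2) ≠ 0 := one_sub_inv_sq_ne_zero hw'
    have h2 : (1 - w ^ 2) ≠ 0 := sub_ne_zero.mpr (fun h => sq_ne_one' hw' h.symm)
    have hw2 : w ^ 2 ≠ 0 := pow_ne_zero 2 hw0
    simp only [hf_def, hg_def, mul_pow, half_sq h1, half_sq h2, Complex.I_sq]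
    field_simp
    ring
  have hg0 : ∀ w ∈ U, g w ≠ 0 := by
    intro w hw
    have hw' : 0 < w.im := hw
    have h2 : (1 - w ^ 2) ≠ 0 := sub_ne_zero.mpr (fun h => sq_ne_one' hw' h.symm)
    simp only [hg_def]
    exact mul_ne_zero Complex.I_ne_zero
      (fun h => h2 ((Complex.cpow_eq_zero_iff _ _).mp h).1)
  -- open cover
  set A : Set ℂ := U ∩ (fun w => f w + g w) ⁻¹' {0}ᶜ with hA_def
  set B : Set ℂ := U ∩ (fun w => f w - g w) ⁻¹' {0}ᶜ with hB_def
  have hAopen : IsOpen A := (hfc.add hgc).isOpen_inter_preimage hUopen isOpen_compl_singleton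
  have hBopen : IsOpen B := (hfc.sub hgc).isOpen_inter_preimage hUopen isOpen_compl_singleton
  have hdisj : Disjoint A B := by
    rw [Set.disjoint_left]
    rintro w ⟨hwU, hwA⟩ ⟨-, hwB⟩
    have hprod : (f w - g w) * (f w + g w) = 0 := by
      have := hsq w hwU
      linear_combination this
    rcases mul_eq_zero.mp hprod with h | h
    · exact hwB h
    · exact hwA h
  have hcover : U ⊆ A ∪ B := by
    intro w hwU
    by_cases h : f w + g w = 0
    · right
      refine ⟨hwU, ?_⟩
      simp only [Set.mem_preimage, Set.mem_compl_iff, Set.mem_singleton_iff]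
      intro h2
      have : g w = 0 := by linear_combination (h - h2) / 2
      exact hg0 w hwU this
    · exact Or.inl ⟨hwU, h⟩
  have hpre : IsPreconnected U := (convex_halfSpace_im_gt 0).isPreconnected
  have hIU : Complex.I ∈ U := by simp [hU_def]
  have hfgI : f Complex.I = g Complex.I := by
    simp only [hf_def, hg_def]
    norm_num [Complex.I_sq]
  have hIA : Complex.I ∈ A := by
    refine ⟨hIU, ?_⟩
    simp only [Set.mem_preimage, Set.mem_compl_iff, Set.mem_singleton_iff, hfgI]
    intro h
    have hgI : g Complex.I = 0 := by linear_combination h / 2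
    exact hg0 _ hIU hgI
  have hUA : U ⊆ A := hpre.subset_left_of_subset_union hAopen hBopen hdisj hcover ⟨_, hIU, hIA⟩
  -- conclude
  have hzA : z ∈ A := hUA hz
  have hzsum : f z + g z ≠ 0 := hzA.2
  have hprod : (f z - g z) * (f z + g z) = 0 := by
    have := hsq z hz
    linear_combination this
  rcases mul_eq_zero.mp hprod with h | h
  · have := sub_eq_zero.mp h
    simpa [hf_def, hg_def] using this
  · exact absurd h hzsum

/-- Boundary values of the standard root on the two sides of the gap: for `t ∈ (−1,1)`,
`w(τ + (t ± iε)γ/2) → ∓ i (γ/2) √(1 − t²)` as `ε → 0⁺`. In particular the boundary values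
on the two sides of the gap are negatives of each other. -/
theorem stdRoot_boundary_values (τ γ : ℂ) (hγ : γ ≠ 0) (t : ℝ)
    (ht : t ∈ Set.Ioo (-1 : ℝ) 1) :
    Filter.Tendsto (fun ε : ℝ => stdRoot τ γ (τ + ((t : ℂ) + (ε : ℂ) * Complex.I) * γ / 2))
      (nhdsWithin 0 (Set.Ioi 0))
      (nhds (-Complex.I * (γ / 2) * (Real.sqrt (1 - t ^ 2) : ℂ))) ∧
    Filter.Tendsto (fun ε : ℝ => stdRoot τ γ (τ + ((t : ℂ) - (ε : ℂ) * Complex.I) * γ / 2))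
      (nhdsWithin 0 (Set.Ioi 0))
      (nhds (Complex.I * (γ / 2) * (Real.sqrt (1 - t ^ 2) : ℂ))) := by
  obtain ⟨ht1, ht2⟩ := ht
  have hpos : (0:ℝ) < 1 - t ^ 2 := by nlinarith
  have hsqrt : (((1 - t ^ 2 : ℝ)) : ℂ) ^ ((1:ℂ)/2) = (Real.sqrt (1 - t ^ 2) : ℂ) := by
    rw [Real.sqrt_eq_rpow, Complex.ofReal_cpow hpos.le]
    norm_num
  have hslit : (((1 - t ^ 2 : ℝ)) : ℂ) ∈ Complex.slitPlane :=
    Complex.ofReal_mem_slitPlane.mpr hpos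
  constructor
  · -- upper side
    have hbase : Tendsto (fun ε : ℝ => 1 - ((t:ℂ) + (ε:ℂ) * Complex.I) ^ 2)
        (nhdsWithin 0 (Set.Ioi 0)) (nhds (((1 - t ^ 2 : ℝ)) : ℂ)) := by
      have hc : Continuous (fun ε : ℝ => 1 - ((t:ℂ) + (ε:ℂ) * Complex.I) ^ 2) := by
        continuity
      have h0 := (hc.tendsto 0).mono_left (nhdsWithin_le_nhds (s := Set.Ioi (0:ℝ)))
      convert h0 using 2
      push_cast
      ring
    have hG : Tendsto (fun ε : ℝ => -(γ/2) * (Complex.I *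
        (1 - ((t:ℂ) + (ε:ℂ) * Complex.I) ^ 2) ^ ((1:ℂ)/2)))
        (nhdsWithin 0 (Set.Ioi 0))
        (nhds (-Complex.I * (γ / 2) * (Real.sqrt (1 - t ^ 2) : ℂ))) := by
      have h1 : Tendsto (fun ε : ℝ => (1 - ((t:ℂ) + (ε:ℂ) * Complex.I) ^ 2) ^ ((1:ℂ)/2))
          (nhdsWithin 0 (Set.Ioi 0)) (nhds ((((1 - t ^ 2 : ℝ)) : ℂ) ^ ((1:ℂ)/2))) :=
        hbase.cpow tendsto_const_nhds hslit
      have h2 := h1.const_mul (-(γ/2) * Complex.I)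
      rw [hsqrt] at h2
      convert h2 using 2 with ε
      · ring
      · ring
    refine Tendsto.congr' ?_ hG
    filter_upwards [self_mem_nhdsWithin] with ε hε
    have hε' : (0:ℝ) < ε := hε
    set z : ℂ := (t:ℂ) + (ε:ℂ) * Complex.I with hz_def
    have hzim : 0 < z.im := by
      simp [hz_def, Complex.add_im, Complex.mul_im]
      exact hε'
    have hz0 : z ≠ 0 := by intro h; rw [h] at hzim; simp at hzim
    have h1 : τ - (τ + z * γ / 2) = -(z * γ / 2) := by ring
    have h3 : γ ^ 2 / (4 * (-(z * γ / 2)) ^ 2) = 1 / z ^ 2 := by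
      field_simp
      ring
    show -(γ/2) * (Complex.I * (1 - z ^ 2) ^ ((1:ℂ)/2)) = stdRoot τ γ (τ + z * γ / 2)
    rw [stdRoot, h1, h3, ← key_identity hzim]
    ring
  · -- lower side
    have hbase : Tendsto (fun ε : ℝ => 1 - ((t:ℂ) - (ε:ℂ) * Complex.I) ^ 2)
        (nhdsWithin 0 (Set.Ioi 0)) (nhds (((1 - t ^ 2 : ℝ)) : ℂ)) := by
      have hc : Continuous (fun ε : ℝ => 1 - ((t:ℂ) - (ε:ℂ) * Complex.I) ^ 2) := by
        continuity
      have h0 := (hc.tendsto 0).mono_left (nhdsWithin_le_nhds (s := Set.Ioi (0:ℝ)))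
      convert h0 using 2
      push_cast
      ring
    have hG : Tendsto (fun ε : ℝ => (γ/2) * (Complex.I *
        (1 - ((t:ℂ) - (ε:ℂ) * Complex.I) ^ 2) ^ ((1:ℂ)/2)))
        (nhdsWithin 0 (Set.Ioi 0))
        (nhds (Complex.I * (γ / 2) * (Real.sqrt (1 - t ^ 2) : ℂ))) := by
      have h1 : Tendsto (fun ε : ℝ => (1 - ((t:ℂ) - (ε:ℂ) * Complex.I) ^ 2) ^ ((1:ℂ)/2))
          (nhdsWithin 0 (Set.Ioi 0)) (nhds ((((1 - t ^ 2 : ℝ)) : ℂ) ^ ((1:ℂ)/2))) :=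
        hbase.cpow tendsto_const_nhds hslit
      have h2 := h1.const_mul ((γ/2) * Complex.I)
      rw [hsqrt] at h2
      convert h2 using 2 with ε
      · ring
      · ring
    refine Tendsto.congr' ?_ hG
    filter_upwards [self_mem_nhdsWithin] with ε hε
    have hε' : (0:ℝ) < ε := hε
    set z : ℂ := (t:ℂ) - (ε:ℂ) * Complex.I with hz_def
    have hzim : 0 < (-z).im := by
      simp [hz_def, Complex.sub_im, Complex.mul_im]
      exact hε'
    have hz0 : z ≠ 0 := by
      intro h; rw [h] at hzim; simp at hzim
    have hkey : (-z) * (1 - 1 / z ^ 2) ^ ((1:ℂ)/2) = Complex.I * (1 - z ^ 2) ^ ((1:ℂ)/2) := by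
      have := key_identity hzim
      simpa [neg_sq] using this
    have h1 : τ - (τ + z * γ / 2) = -(z * γ / 2) := by ring
    have h3 : γ ^ 2 / (4 * (-(z * γ / 2)) ^ 2) = 1 / z ^ 2 := by
      field_simp
      ring
    show (γ/2) * (Complex.I * (1 - z ^ 2) ^ ((1:ℂ)/2)) = stdRoot τ γ (τ + z * γ / 2)
    rw [stdRoot, h1, h3, ← hkey]
    ring
end

section
/- Let τ ∈ ℂ, γ ∈ ℂ, and R > |γ|/2, and let w(λ) = (τ−λ)·√⁺(1 − γ²/(4(τ−λ)²)) be the standard root, which is holomorphic and nonvanishing off the gap G = {τ + tγ/2 : t ∈ [−1,1]}. If f is holomorphic on an open set containing the closed disc {λ : |λ − τ| ≤ R}, then (1/(2π))·|∮_{|λ−τ|=R} f(λ)/w(λ) dλ| ≤ max_{λ∈G} |f(λ)|, where the integral is over the counterclockwise circle of radius R centered at τ. -/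
lemma re_cpow_half_pos {z : ℂ} (hz : 0 < z.re) : 0 < (z ^ ((1:ℂ)/2)).re := by
  have hz0 : z ≠ 0 := by intro h; simp [h] at hz
  rw [Complex.cpow_def_of_ne_zero hz0, Complex.exp_re]
  apply mul_pos (Real.exp_pos _)
  apply Real.cos_pos_of_mem_Ioo
  have him : (Complex.log z * (1/2)).im = z.arg / 2 := by
    simp [Complex.mul_im, Complex.log_im]
    ring
  rw [him]
  have harg : |z.arg| < Real.pi/2 := Complex.abs_arg_lt_pi_div_two_iff.mpr (Or.inl hz)
  rw [abs_lt] at harg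
  constructor <;> [linarith [harg.1]; linarith [harg.2]]

lemma cpow_half_sq {z : ℂ} (hz : z ≠ 0) : (z ^ ((1:ℂ)/2)) ^ 2 = z := by
  rw [sq, ← Complex.cpow_add _ _ hz]
  norm_num

lemma stdRoot_props (τ γ lam : ℂ) (h : ‖γ‖ / 2 < ‖lam - τ‖) :
    ∃ s : ℂ, stdRoot τ γ lam = -s ∧ s ≠ 0 ∧ s ^ 2 = (lam - τ) ^ 2 - γ ^ 2 / 4 ∧
      0 < ((lam - τ) * (starRingEnd ℂ) s).re := by
  set ζ : ℂ := lam - τ with hζdef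
  have hζpos : 0 < ‖ζ‖ := lt_of_le_of_lt (by positivity) h
  have hζ0 : ζ ≠ 0 := by simpa using hζpos.ne'
  set c : ℂ := γ ^ 2 / (4 * ζ ^ 2) with hcdef
  have hc : ‖c‖ < 1 := by
    rw [hcdef, norm_div, norm_mul, norm_pow, norm_pow]
    have h4 : ‖(4:ℂ)‖ = 4 := by norm_num
    rw [h4, div_lt_one (by positivity)]
    have h2 : ‖γ‖ < 2 * ‖ζ‖ := by linarith
    nlinarith [norm_nonneg γ, norm_nonneg ζ]
  have hcre : |c.re| ≤ ‖c‖ := Complex.abs_re_le_norm c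
  have hre : 0 < (1 - c).re := by
    have h1 := (le_abs_self c.re).trans hcre
    simp only [Complex.sub_re, Complex.one_re]
    linarith
  have h1c0 : (1 : ℂ) - c ≠ 0 := by
    intro hh
    rw [hh] at hre
    simp at hre
  have hq2 : ((1 - c) ^ ((1:ℂ)/2)) ^ 2 = 1 - c := cpow_half_sq h1c0
  have hqre : 0 < ((1 - c) ^ ((1:ℂ)/2)).re := re_cpow_half_pos hre
  set q : ℂ := (1 - c) ^ ((1:ℂ)/2) with hqdef
  have hq0 : q ≠ 0 := by
    intro hh
    rw [hh] at hqre
    simp at hqre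
  refine ⟨ζ * q, ?_, mul_ne_zero hζ0 hq0, ?_, ?_⟩
  · rw [stdRoot]
    have h1 : τ - lam = -ζ := by rw [hζdef]; ring
    have h2 : (1 : ℂ) - γ ^ 2 / (4 * (τ - lam) ^ 2) = 1 - c := by
      rw [h1, hcdef]; ring_nf
    rw [h2, h1, ← hqdef]; ring
  · rw [mul_pow, hq2, hcdef]
    field_simp
  · have hrew : ζ * (starRingEnd ℂ) (ζ * q) = (Complex.normSq ζ : ℂ) * (starRingEnd ℂ) q := by
      rw [map_mul, ← mul_assoc, Complex.mul_conj]
    rw [hrew]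
    have : ((Complex.normSq ζ : ℂ) * (starRingEnd ℂ) q).re = Complex.normSq ζ * q.re := by
      simp [Complex.mul_re, Complex.conj_re, Complex.conj_im]
    rw [this]
    exact mul_pos (Complex.normSq_pos.mpr hζ0) hqre

lemma pf_aux (ζ γ u zm zp : ℂ) (hγ : γ ≠ 0) (hu : u ≠ 0) (hm : u - zm ≠ 0)
    (hp : u - zp ≠ 0) (hmp : zm - zp ≠ 0) (hprod : zm * zp = 1)
    (hsum : γ * (zm + zp) = 4 * ζ) (hden : ζ - γ / 2 * ((u + u⁻¹) / 2) ≠ 0) :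
    (u * Complex.I) • ((4 * Complex.I / γ * (zm - zp)⁻¹) * ((u - zm)⁻¹ - (u - zp)⁻¹))
      = (ζ - γ / 2 * ((u + u⁻¹) / 2))⁻¹ := by
  have hkey : (ζ - γ / 2 * ((u + u⁻¹) / 2)) = (u * ζ * 4 - u ^ 2 * γ - γ) / (4 * u) := by
    field_simp
    ring
  have hden2 : u * ζ * 4 - u ^ 2 * γ - γ ≠ 0 := by
    intro h
    apply hden
    rw [hkey, h, zero_div]
  have h1 : (u - zm)⁻¹ - (u - zp)⁻¹ = (zm - zp) * ((u - zm) * (u - zp))⁻¹ := by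
    field_simp
    ring
  rw [smul_eq_mul, hkey, inv_div, h1]
  have hq : (zm - zp)⁻¹ * ((zm - zp) * ((u - zm) * (u - zp))⁻¹) = ((u - zm) * (u - zp))⁻¹ := by
    rw [← mul_assoc, inv_mul_cancel₀ hmp, one_mul]
  rw [mul_assoc (4 * Complex.I / γ), hq, eq_div_iff hden2]
  field_simp
  linear_combination (u * (4 * ζ - u * γ) - γ) * Complex.I_sq + u * hsum + (-γ) * hprod

lemma key_identity_s8 (τ γ lam : ℂ) (h : ‖γ‖ / 2 < ‖lam - τ‖) :
    (stdRoot τ γ lam)⁻¹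
      = (-(2 * (Real.pi : ℂ)))⁻¹ * ∫ θ in (0:ℝ)..(2 * Real.pi),
          (lam - (τ + γ / 2 * (Real.cos θ : ℂ)))⁻¹ := by
  have hπ : ((Real.pi : ℂ)) ≠ 0 := Complex.ofReal_ne_zero.mpr Real.pi_ne_zero
  obtain ⟨s, hstd, hs0, hs2, hspos⟩ := stdRoot_props τ γ lam h
  have hζpos : 0 < ‖lam - τ‖ := lt_of_le_of_lt (by positivity) h
  have hζ0 : lam - τ ≠ 0 := norm_pos_iff.mp hζpos
  by_cases hγ : γ = 0
  · subst hγ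
    have hstd' : stdRoot τ 0 lam = τ - lam := by
      simp [stdRoot]
    rw [hstd']
    have : ∀ θ : ℝ, (lam - (τ + 0 / 2 * (Real.cos θ : ℂ)))⁻¹ = (lam - τ)⁻¹ := by
      intro θ; norm_num
    rw [intervalIntegral.integral_congr (fun θ _ => this θ), intervalIntegral.integral_const]
    rw [sub_zero, Complex.real_smul]
    push_cast
    have hτlam : τ - lam ≠ 0 := sub_ne_zero.mpr (Ne.symm (sub_ne_zero.mp hζ0))
    field_simp
    ring
  · set zm : ℂ := 2 / γ * ((lam - τ) - s) with hzmdef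
    set zp : ℂ := 2 / γ * ((lam - τ) + s) with hzpdef
    have hprod : zm * zp = 1 := by
      rw [hzmdef, hzpdef]
      field_simp
      linear_combination (-4 : ℂ) * hs2
    have hsum : γ * (zm + zp) = 4 * (lam - τ) := by
      rw [hzmdef, hzpdef]
      field_simp
      ring
    have hlt : ‖(lam - τ) - s‖ < ‖(lam - τ) + s‖ := by
      have h1 : Complex.normSq ((lam - τ) - s) < Complex.normSq ((lam - τ) + s) := by
        rw [Complex.normSq_sub, Complex.normSq_add]
        linarith
      have h2 : ‖(lam - τ) - s‖ ^ 2 < ‖(lam - τ) + s‖ ^ 2 := by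
        rw [Complex.sq_norm, Complex.sq_norm]
        exact h1
      exact lt_of_pow_lt_pow_left₀ 2 (norm_nonneg _) h2
    have hmlt : ‖zm‖ < ‖zp‖ := by
      rw [hzmdef, hzpdef, norm_mul, norm_mul]
      have : 0 < ‖(2:ℂ)/γ‖ := by
        simp only [norm_div]
        apply div_pos (by norm_num) (norm_pos_iff.mpr hγ)
      exact mul_lt_mul_of_pos_left hlt this
    have hznorm : ‖zm‖ * ‖zp‖ = 1 := by rw [← norm_mul, hprod, norm_one]
    have hzm1 : ‖zm‖ < 1 := by nlinarith [norm_nonneg zm, norm_nonneg zp]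
    have hzp1 : 1 < ‖zp‖ := by nlinarith [norm_nonneg zm, norm_nonneg zp]
    have hmp : zm - zp ≠ 0 := by
      intro hh
      rw [sub_eq_zero] at hh
      rw [hh] at hzm1
      linarith
    -- rewrite the interval integral as a circle integral
    have hint : (∫ θ in (0:ℝ)..(2 * Real.pi), (lam - (τ + γ / 2 * (Real.cos θ : ℂ)))⁻¹)
        = ∮ z in C(0, 1), (4 * Complex.I / γ * (zm - zp)⁻¹) • ((z - zm)⁻¹ - (z - zp)⁻¹) := by
      rw [circleIntegral]
      apply intervalIntegral.integral_congr
      intro θ _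
      dsimp only
      have hu0 : circleMap 0 1 θ ≠ 0 := circleMap_ne_center one_ne_zero
      have hunorm : ‖circleMap 0 1 θ‖ = 1 := by
        rw [norm_circleMap_zero]; norm_num
      have hm : circleMap 0 1 θ - zm ≠ 0 := by
        intro hh
        rw [sub_eq_zero] at hh
        rw [hh] at hunorm
        rw [hunorm] at hzm1
        exact lt_irrefl _ hzm1
      have hp : circleMap 0 1 θ - zp ≠ 0 := by
        intro hh
        rw [sub_eq_zero] at hh
        rw [hh] at hunorm
        rw [hunorm] at hzp1
        exact lt_irrefl _ hzp1
      have hcos : ((Real.cos θ : ℝ) : ℂ)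
          = (circleMap 0 1 θ + (circleMap 0 1 θ)⁻¹) / 2 := by
        have hc1 : circleMap 0 1 θ = Complex.exp (θ * Complex.I) := by
          simp [circleMap]
        rw [hc1, ← Complex.exp_neg, Complex.ofReal_cos, Complex.cos]
        ring_nf
      have hden : (lam - τ) - γ / 2 * ((circleMap 0 1 θ + (circleMap 0 1 θ)⁻¹) / 2) ≠ 0 := by
        rw [← hcos]
        intro hh
        have heq : lam - τ = γ / 2 * (Real.cos θ : ℂ) := by
          have := sub_eq_zero.mp hh
          linear_combination this
        have hnorm : ‖lam - τ‖ ≤ ‖γ‖ / 2 := by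
          rw [heq, norm_mul, norm_div]
          have : ‖((Real.cos θ : ℝ) : ℂ)‖ ≤ 1 := by
            rw [Complex.norm_real]
            exact Real.abs_cos_le_one θ
          calc ‖γ‖ / ‖(2:ℂ)‖ * ‖((Real.cos θ:ℝ):ℂ)‖ ≤ ‖γ‖ / ‖(2:ℂ)‖ * 1 := by
                apply mul_le_mul_of_nonneg_left this (by positivity)
            _ = ‖γ‖ / 2 := by norm_num
        linarith [h]
      have hgoal : lam - (τ + γ / 2 * (Real.cos θ : ℂ))
          = (lam - τ) - γ / 2 * ((circleMap 0 1 θ + (circleMap 0 1 θ)⁻¹) / 2) := by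
        rw [← hcos]; ring
      rw [hgoal, deriv_circleMap]
      exact (pf_aux (lam - τ) γ (circleMap 0 1 θ) zm zp hγ hu0 hm hp hmp hprod hsum hden).symm
    -- evaluate the circle integral
    have him : CircleIntegrable (fun z => (z - zm)⁻¹) 0 1 := by
      apply ContinuousOn.circleIntegrable one_pos.le
      apply ContinuousOn.inv₀ (continuous_sub_right zm).continuousOn
      intro x hx
      rw [mem_sphere_iff_norm, sub_zero] at hx
      intro hh
      rw [sub_eq_zero] at hh
      rw [hh] at hx
      rw [hx] at hzm1
      exact lt_irrefl _ hzm1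
    have hip : CircleIntegrable (fun z => (z - zp)⁻¹) 0 1 := by
      apply ContinuousOn.circleIntegrable one_pos.le
      apply ContinuousOn.inv₀ (continuous_sub_right zp).continuousOn
      intro x hx
      rw [mem_sphere_iff_norm, sub_zero] at hx
      intro hh
      rw [sub_eq_zero] at hh
      rw [hh] at hx
      rw [hx] at hzp1
      exact lt_irrefl _ hzp1
    have hIm : (∮ z in C(0, 1), (z - zm)⁻¹) = 2 * Real.pi * Complex.I := by
      apply circleIntegral.integral_sub_inv_of_mem_ball
      rwa [Metric.mem_ball, dist_zero_right]
    have hIp : (∮ z in C(0, 1), (z - zp)⁻¹) = 0 := by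
      apply Complex.circleIntegral_eq_zero_of_differentiable_on_off_countable one_pos.le
        Set.countable_empty
      · apply ContinuousOn.inv₀ (continuous_sub_right zp).continuousOn
        intro x hx
        rw [Metric.mem_closedBall, dist_zero_right] at hx
        intro hh
        rw [sub_eq_zero] at hh
        rw [hh] at hx
        linarith
      · intro x hx
        have hx' : ‖x‖ < 1 := by
          have := hx.1
          rwa [Metric.mem_ball, dist_zero_right] at this
        have hne : x - zp ≠ 0 := by
          intro hh
          rw [sub_eq_zero] at hh
          rw [hh] at hx'
          linarith
        exact (differentiableAt_id.sub_const zp).inv hne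
    rw [hint, circleIntegral.integral_smul, circleIntegral.integral_sub him hip, hIm, hIp,
      hstd]
    have hzmzp : zm - zp = -(4 * s / γ) := by
      rw [hzmdef, hzpdef]; field_simp; ring
    rw [hzmzp, smul_eq_mul]
    field_simp [hs0]
    linear_combination (-2 * (Real.pi : ℂ)) * Complex.I_sq

set_option maxHeartbeats 1000000 in
/-- If `f` is holomorphic on an open set containing the closed disc of radius `R > |γ|/2`
around `τ`, then `(1/(2π)) |∮_{|λ−τ| = R} f(λ)/w(λ) dλ| ≤ max_{λ ∈ G} |f(λ)|`, where `w`
is the standard root associated to the gap `G = {τ + tγ/2 : t ∈ [−1,1]}`. -/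
theorem circleIntegral_div_stdRoot_bound (τ γ : ℂ) (R : ℝ) (hR : ‖γ‖ / 2 < R)
    (f : ℂ → ℂ) (U : Set ℂ) (hU : IsOpen U) (hsub : Metric.closedBall τ R ⊆ U)
    (hf : DifferentiableOn ℂ f U) :
    (1 / (2 * Real.pi)) * ‖∮ z in C(τ, R), f z / stdRoot τ γ z‖
      ≤ sSup ((fun z => ‖f z‖) '' gap τ γ) := by
  have hπ : (0:ℝ) < Real.pi := Real.pi_pos
  have hπC : ((Real.pi : ℂ)) ≠ 0 := Complex.ofReal_ne_zero.mpr Real.pi_ne_zero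
  have h2π : (0:ℝ) ≤ 2 * Real.pi := by linarith
  have hRpos : (0:ℝ) < R := lt_of_le_of_lt (by positivity) hR
  set M : ℝ := sSup ((fun z => ‖f z‖) '' gap τ γ) with hMdef
  -- gap facts
  have hgap_cb : gap τ γ ⊆ Metric.closedBall τ R := by
    rintro z ⟨t, ht, rfl⟩
    rw [Metric.mem_closedBall, dist_eq_norm]
    have h1 : τ + (t:ℂ) * γ / 2 - τ = (t:ℂ) * γ / 2 := by ring
    rw [h1, norm_div, norm_mul, Complex.norm_real]
    have h2 : |t| ≤ 1 := abs_le.mpr ht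
    have h3 : ‖(2:ℂ)‖ = 2 := by norm_num
    rw [h3]
    rw [Real.norm_eq_abs]
    nlinarith [norm_nonneg γ, abs_nonneg t]
  have hgap_eq : gap τ γ = (fun t : ℝ => τ + (t:ℂ) * γ / 2) '' Set.Icc (-1) 1 := by
    ext z
    simp only [gap, Set.mem_setOf_eq, Set.mem_image]
    constructor
    · rintro ⟨t, ht, rfl⟩; exact ⟨t, ht, rfl⟩
    · rintro ⟨t, ht, rfl⟩; exact ⟨t, ht, rfl⟩
  have hcompact : IsCompact (gap τ γ) := by
    rw [hgap_eq]
    apply isCompact_Icc.image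
    continuity
  have hbdd : BddAbove ((fun z => ‖f z‖) '' gap τ γ) := by
    apply IsCompact.bddAbove
    apply hcompact.image_of_continuousOn
    exact (hf.continuousOn.mono (hgap_cb.trans hsub)).norm
  have hgθ_mem : ∀ θ : ℝ, τ + γ / 2 * (Real.cos θ : ℂ) ∈ gap τ γ := by
    intro θ
    exact ⟨Real.cos θ, ⟨Real.neg_one_le_cos θ, Real.cos_le_one θ⟩, by ring⟩
  have hfle : ∀ θ : ℝ, ‖f (τ + γ / 2 * (Real.cos θ : ℂ))‖ ≤ M := by
    intro θ
    exact le_csSup hbdd ⟨_, hgθ_mem θ, rfl⟩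
  have hgball : ∀ θ : ℝ, τ + γ / 2 * (Real.cos θ : ℂ) ∈ Metric.ball τ R := by
    intro θ
    rw [Metric.mem_ball, dist_eq_norm]
    have h1 : τ + γ / 2 * (Real.cos θ : ℂ) - τ = γ / 2 * (Real.cos θ : ℂ) := by ring
    rw [h1, norm_mul, norm_div, Complex.norm_real, Real.norm_eq_abs]
    have h2 : |Real.cos θ| ≤ 1 := Real.abs_cos_le_one θ
    have h3 : ‖(2:ℂ)‖ = 2 := by norm_num
    rw [h3]
    nlinarith [norm_nonneg γ]
  have hsphere : ∀ θ : ℝ, ‖circleMap τ R θ - τ‖ = R := by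
    intro θ
    rw [circleMap_sub_center, norm_circleMap_zero, abs_of_pos hRpos]
  have hden_ne : ∀ θ' θ : ℝ, circleMap τ R θ' - (τ + γ / 2 * (Real.cos θ : ℂ)) ≠ 0 := by
    intro θ' θ hh
    rw [sub_eq_zero] at hh
    have h1 := hsphere θ'
    rw [hh] at h1
    have h2 := hgball θ
    rw [Metric.mem_ball, dist_eq_norm, h1] at h2
    exact lt_irrefl _ h2
  -- the 2-variable integrand
  set F : ℝ × ℝ → ℂ := fun p =>
    (-(2 * (Real.pi : ℂ)))⁻¹ * ((circleMap 0 R p.1 * Complex.I) * f (circleMap τ R p.1)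
      * (circleMap τ R p.1 - (τ + γ / 2 * (Real.cos p.2 : ℂ)))⁻¹) with hFdef
  have hsub' : ∀ θ : ℝ, circleMap τ R θ ∈ U := by
    intro θ
    apply hsub
    rw [Metric.mem_closedBall, dist_eq_norm, hsphere θ]
  have hFcont : Continuous F := by
    have hc1 : Continuous fun p : ℝ × ℝ => circleMap 0 R p.1 * Complex.I :=
      ((continuous_circleMap 0 R).comp continuous_fst).mul continuous_const
    have hc2 : Continuous fun p : ℝ × ℝ => f (circleMap τ R p.1) :=
      ContinuousOn.comp_continuous hf.continuousOn
        ((continuous_circleMap τ R).comp continuous_fst) (fun p => hsub' p.1)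
    have hc3 : Continuous fun p : ℝ × ℝ =>
        (circleMap τ R p.1 - (τ + γ / 2 * (Real.cos p.2 : ℂ)))⁻¹ := by
      apply Continuous.inv₀
      · apply Continuous.sub
        · exact (continuous_circleMap τ R).comp continuous_fst
        · apply continuous_const.add
          exact continuous_const.mul
            (Complex.continuous_ofReal.comp (Real.continuous_cos.comp continuous_snd))
      · exact fun p => hden_ne p.1 p.2
    exact continuous_const.mul ((hc1.mul hc2).mul hc3)
  -- step 1 : key identity under the circle integral
  have hstep1 : (∮ z in C(τ, R), f z / stdRoot τ γ z)
      = ∫ θ' in (0:ℝ)..(2 * Real.pi), ∫ θ in (0:ℝ)..(2 * Real.pi), F (θ', θ) := by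
    rw [circleIntegral]
    apply intervalIntegral.integral_congr
    intro θ' _
    dsimp only
    have hkey := key_identity_s8 τ γ (circleMap τ R θ') (by rw [hsphere θ']; exact hR)
    rw [deriv_circleMap, smul_eq_mul, div_eq_mul_inv, hkey]
    rw [hFdef]
    dsimp only
    rw [← intervalIntegral.integral_const_mul, ← intervalIntegral.integral_const_mul,
      ← intervalIntegral.integral_const_mul]
    apply intervalIntegral.integral_congr
    intro θ _
    dsimp only
    ring
  -- step 2 : Fubini
  have hInt : MeasureTheory.Integrable (Function.uncurry fun θ' θ => F (θ', θ))
      ((MeasureTheory.volume.restrict (Set.Ioc (0:ℝ) (2 * Real.pi))).prod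
        (MeasureTheory.volume.restrict (Set.Ioc (0:ℝ) (2 * Real.pi)))) := by
    rw [MeasureTheory.Measure.prod_restrict]
    have h1 : MeasureTheory.IntegrableOn F
        (Set.Icc (0:ℝ) (2 * Real.pi) ×ˢ Set.Icc (0:ℝ) (2 * Real.pi))
        (MeasureTheory.volume.prod MeasureTheory.volume) := by
      rw [← MeasureTheory.Measure.volume_eq_prod]
      exact hFcont.continuousOn.integrableOn_compact (isCompact_Icc.prod isCompact_Icc)
    exact h1.mono_set (Set.prod_mono Set.Ioc_subset_Icc_self Set.Ioc_subset_Icc_self)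
  have hswap : (∫ θ' in (0:ℝ)..(2 * Real.pi), ∫ θ in (0:ℝ)..(2 * Real.pi), F (θ', θ))
      = ∫ θ in (0:ℝ)..(2 * Real.pi), ∫ θ' in (0:ℝ)..(2 * Real.pi), F (θ', θ) := by
    simp_rw [intervalIntegral.integral_of_le h2π]
    exact MeasureTheory.integral_integral_swap hInt
  -- step 3 : Cauchy integral formula for the inner integral
  have hdiff : DiffContOnCl ℂ f (Metric.ball τ R) := by
    apply DifferentiableOn.diffContOnCl
    rw [closure_ball τ hRpos.ne']
    exact hf.mono hsub
  have hcauchy : ∀ θ : ℝ, (∫ θ' in (0:ℝ)..(2 * Real.pi), F (θ', θ))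
      = -Complex.I * f (τ + γ / 2 * (Real.cos θ : ℂ)) := by
    intro θ
    have hCau := hdiff.circleIntegral_sub_inv_smul (hgball θ)
    have h1 : (∮ z in C(τ, R), (z - (τ + γ / 2 * (Real.cos θ : ℂ)))⁻¹ • f z)
        = ∫ θ' in (0:ℝ)..(2 * Real.pi),
            (circleMap 0 R θ' * Complex.I) * ((circleMap τ R θ' - (τ + γ / 2 * (Real.cos θ : ℂ)))⁻¹ * f (circleMap τ R θ')) := by
      rw [circleIntegral]
      apply intervalIntegral.integral_congr
      intro θ' _
      dsimp only
      rw [deriv_circleMap, smul_eq_mul, smul_eq_mul]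
    have h2 : (∫ θ' in (0:ℝ)..(2 * Real.pi), F (θ', θ))
        = (-(2 * (Real.pi : ℂ)))⁻¹ * ∫ θ' in (0:ℝ)..(2 * Real.pi),
            (circleMap 0 R θ' * Complex.I) * ((circleMap τ R θ' - (τ + γ / 2 * (Real.cos θ : ℂ)))⁻¹ * f (circleMap τ R θ')) := by
      rw [← intervalIntegral.integral_const_mul]
      apply intervalIntegral.integral_congr
      intro θ' _
      rw [hFdef]
      dsimp only
      ring
    have hcc : ((-(2 * (Real.pi:ℂ)))⁻¹ * (2 * (Real.pi:ℂ) * Complex.I)) = -Complex.I := by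
      field_simp
    rw [h2, ← h1, hCau, smul_eq_mul, ← mul_assoc, hcc]
  -- combine
  have htotal : (∮ z in C(τ, R), f z / stdRoot τ γ z)
      = ∫ θ in (0:ℝ)..(2 * Real.pi), -Complex.I * f (τ + γ / 2 * (Real.cos θ : ℂ)) := by
    rw [hstep1, hswap]
    exact intervalIntegral.integral_congr (fun θ _ => hcauchy θ)
  rw [htotal]
  have hbound : ‖∫ θ in (0:ℝ)..(2 * Real.pi), -Complex.I * f (τ + γ / 2 * (Real.cos θ : ℂ))‖
      ≤ M * |2 * Real.pi - 0| := by
    apply intervalIntegral.norm_integral_le_of_norm_le_const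
    intro θ _
    rw [norm_mul, norm_neg, Complex.norm_I, one_mul]
    exact hfle θ
  rw [sub_zero, abs_of_nonneg h2π] at hbound
  have hpos : (0:ℝ) < 1 / (2 * Real.pi) := by positivity
  calc (1 / (2 * Real.pi)) * ‖∫ θ in (0:ℝ)..(2 * Real.pi), -Complex.I * f (τ + γ / 2 * (Real.cos θ : ℂ))‖
      ≤ (1 / (2 * Real.pi)) * (M * (2 * Real.pi)) := by
        exact mul_le_mul_of_nonneg_left hbound hpos.le
    _ = M := by field_simp
end

section
/- Let τ ∈ ℂ, γ ∈ ℂ, and R > |γ|/2, and let w(λ) = (τ−λ)·√⁺(1 − γ²/(4(τ−λ)²)) be the standard root, holomorphic off the gap G = {τ + tγ/2 : t ∈ [−1,1]}. Then ∮_{|λ−τ|=R} w(λ) dλ = iπγ²/4, where the integral is over the counterclockwise circle of radius R centered at τ. -/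
open Complex Set Metric

lemma re_cpow_half_nonneg (z : ℂ) : 0 ≤ (z ^ ((1:ℂ)/2)).re := by
  rcases eq_or_ne z 0 with rfl | hz
  · simp [Complex.zero_cpow (by norm_num : (1:ℂ)/2 ≠ 0)]
  · rw [Complex.cpow_def_of_ne_zero hz, Complex.exp_re]
    have him : (Complex.log z * ((1:ℂ)/2)).im = z.arg / 2 := by
      simp [Complex.mul_im, Complex.log_im]
      ring
    rw [him]
    have ha := Complex.arg_mem_Ioc z
    simp only [Set.mem_Ioc] at ha
    have hpi := Real.pi_pos
    exact mul_nonneg (Real.exp_pos _).le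
      (Real.cos_nonneg_of_mem_Icc ⟨by linarith [ha.1], by linarith [ha.2]⟩)

lemma gap_self (τ γ : ℂ) : τ ∈ gap τ γ := ⟨0, by norm_num, by simp⟩

lemma ne_tau_of_notMem_gap {τ γ z : ℂ} (hz : z ∉ gap τ γ) : τ - z ≠ 0 := by
  intro h
  rw [sub_eq_zero] at h
  exact hz (h ▸ gap_self τ γ)

lemma base_mem_slitPlane {τ γ z : ℂ} (hz : z ∉ gap τ γ) :
    1 - γ ^ 2 / (4 * (τ - z) ^ 2) ∈ Complex.slitPlane := by
  have hzτ : τ - z ≠ 0 := ne_tau_of_notMem_gap hz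
  by_contra h
  rw [Complex.mem_slitPlane_iff] at h
  push_neg at h
  obtain ⟨h1, h2⟩ := h
  set v : ℂ := γ / (2 * (τ - z)) with hv
  have hvsq : v ^ 2 = γ ^ 2 / (4 * (τ - z) ^ 2) := by
    rw [hv, div_pow]; congr 1; ring
  have him : (v ^ 2).im = 0 := by
    rw [hvsq]
    have : (1 - γ ^ 2 / (4 * (τ - z) ^ 2)).im = 0 := h2
    simpa using this
  have hre : 1 ≤ (v ^ 2).re := by
    rw [hvsq]
    have : (1 - γ ^ 2 / (4 * (τ - z) ^ 2)).re ≤ 0 := h1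
    simp only [Complex.sub_re, Complex.one_re] at this
    linarith
  have hsq_im : 2 * v.re * v.im = 0 := by
    have := Complex.mul_im v v
    rw [← sq] at this
    rw [him] at this
    nlinarith [this]
  have hsq_re : v.re ^ 2 - v.im ^ 2 = (v ^ 2).re := by
    have := Complex.mul_re v v
    rw [← sq] at this
    rw [this]; ring
  have hvim : v.im = 0 := by
    rcases mul_eq_zero.mp (by linarith [hsq_im] : (2 * v.re) * v.im = 0) with h' | h'
    · exfalso
      have hvre : v.re = 0 := by linarith
      nlinarith [hre, hsq_re]
    · exact h'
  have hvre2 : 1 ≤ v.re ^ 2 := by nlinarith [hre, hsq_re]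
  have hvre_ne : v.re ≠ 0 := by intro h'; rw [h'] at hvre2; norm_num at hvre2
  have hveq : v = (v.re : ℂ) := Complex.ext rfl (by simp [hvim])
  apply hz
  have h1abs : 1 ≤ |v.re| := by nlinarith [abs_nonneg v.re, _root_.sq_abs v.re]
  have habs : |(-1 : ℝ) / v.re| ≤ 1 := by
    rw [abs_div, abs_neg, abs_one, div_le_one (by linarith : (0:ℝ) < |v.re|)]
    exact h1abs
  have hvne : v ≠ 0 := by
    rw [hveq]
    exact_mod_cast Complex.ofReal_ne_zero.mpr hvre_ne
  refine ⟨-1 / v.re, ⟨(abs_le.mp habs).1, (abs_le.mp habs).2⟩, ?_⟩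
  have hγ : γ = v * (2 * (τ - z)) := by
    rw [hv]; field_simp
  rw [hγ]
  push_cast
  rw [show ((v.re : ℝ) : ℂ) = v from hveq.symm]
  field_simp
  ring

lemma stdRoot_differentiableAt {τ γ z : ℂ} (hz : z ∉ gap τ γ) :
    DifferentiableAt ℂ (stdRoot τ γ) z := by
  have hzτ : τ - z ≠ 0 := ne_tau_of_notMem_gap hz
  have hbase : DifferentiableAt ℂ (fun w => 1 - γ ^ 2 / (4 * (τ - w) ^ 2)) z := by
    apply (differentiableAt_const _).sub
    apply DifferentiableAt.div (differentiableAt_const _)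
    · exact (differentiableAt_const _).mul
        (((differentiableAt_const τ).sub differentiableAt_id).pow 2)
    · simp [hzτ, pow_ne_zero]
  exact ((differentiableAt_const τ).sub differentiableAt_id).mul
    (hbase.cpow (differentiableAt_const _) (base_mem_slitPlane hz))

lemma stdRoot_sq {τ γ z : ℂ} :
    ((1 - γ ^ 2 / (4 * (τ - z) ^ 2)) ^ ((1 : ℂ) / 2)) ^ 2
      = 1 - γ ^ 2 / (4 * (τ - z) ^ 2) := by
  rw [show (1 : ℂ)/2 = ((2:ℕ) : ℂ)⁻¹ by norm_num]
  exact Complex.cpow_nat_inv_pow _ two_ne_zero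

lemma stdRoot_tail_eq {τ γ z : ℂ} (hzτ : τ - z ≠ 0) :
    stdRoot τ γ z - (τ - z) - γ ^ 2 / (8 * (z - τ))
      = -(τ - z) * (γ ^ 2 / (4 * (τ - z) ^ 2)) ^ 2
          / (2 * ((1 - γ ^ 2 / (4 * (τ - z) ^ 2)) ^ ((1 : ℂ) / 2) + 1) ^ 2) := by
  set s := (1 - γ ^ 2 / (4 * (τ - z) ^ 2)) ^ ((1 : ℂ) / 2) with hsdef
  have hs2 : s ^ 2 = 1 - γ ^ 2 / (4 * (τ - z) ^ 2) := stdRoot_sq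
  have hs1 : s + 1 ≠ 0 := by
    intro h
    have h1 : (s + 1).re = 0 := by rw [h]; simp
    have h2 := re_cpow_half_nonneg (1 - γ ^ 2 / (4 * (τ - z) ^ 2))
    rw [← hsdef] at h2
    simp only [Complex.add_re, Complex.one_re] at h1
    linarith
  have hγ : γ ^ 2 = 4 * (τ - z) ^ 2 * (1 - s ^ 2) := by
    field_simp at hs2
    linear_combination hs2
  have hzτ' : z - τ ≠ 0 := sub_ne_zero.mpr (Ne.symm (sub_ne_zero.mp hzτ))
  rw [stdRoot, ← hsdef, hγ]
  field_simp
  ring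

lemma stdRoot_tail_bound {τ γ : ℂ} {R : ℝ} (hR : 0 < R) {z : ℂ}
    (hz : z ∈ Metric.sphere τ R) :
    ‖stdRoot τ γ z - (τ - z) - γ ^ 2 / (8 * (z - τ))‖ ≤ ‖γ‖ ^ 4 / (32 * R ^ 3) := by
  have hdist : ‖τ - z‖ = R := by
    rw [mem_sphere_iff_norm] at hz
    rw [← norm_neg]; simpa [neg_sub] using hz
  have hzτ : τ - z ≠ 0 := by
    intro h; rw [h, norm_zero] at hdist; exact hR.ne hdist
  rw [stdRoot_tail_eq hzτ]
  set s := (1 - γ ^ 2 / (4 * (τ - z) ^ 2)) ^ ((1 : ℂ) / 2) with hsdef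
  have hs1 : (1 : ℝ) ≤ ‖s + 1‖ := by
    have h2 := re_cpow_half_nonneg (1 - γ ^ 2 / (4 * (τ - z) ^ 2))
    rw [← hsdef] at h2
    calc (1 : ℝ) ≤ (s + 1).re := by simp only [Complex.add_re, Complex.one_re]; linarith
    _ ≤ ‖s + 1‖ := Complex.re_le_norm _
  rw [norm_div, norm_mul, norm_neg, hdist, norm_pow, norm_div, norm_mul, norm_pow,
    norm_mul, norm_pow]
  have h4 : ‖(4 : ℂ)‖ = 4 := by norm_num
  have h2 : ‖(2 : ℂ)‖ = 2 := by norm_num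
  rw [h4, h2, hdist]
  have hnum : R * (‖γ‖ ^ 2 / (4 * R ^ 2)) ^ 2 = ‖γ‖ ^ 4 / (16 * R ^ 3) := by
    field_simp; ring
  rw [hnum, norm_pow]
  have hden : (2 : ℝ) ≤ 2 * ‖s + 1‖ ^ 2 := by nlinarith [hs1, norm_nonneg (s+1)]
  have hnum_nonneg : (0:ℝ) ≤ ‖γ‖ ^ 4 / (16 * R ^ 3) := by positivity
  calc ‖γ‖ ^ 4 / (16 * R ^ 3) / (2 * ‖s + 1‖ ^ 2)
      ≤ ‖γ‖ ^ 4 / (16 * R ^ 3) / 2 := by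
        apply div_le_div_of_nonneg_left hnum_nonneg (by norm_num) hden
    _ = ‖γ‖ ^ 4 / (32 * R ^ 3) := by ring

lemma gap_subset {τ γ : ℂ} {r : ℝ} (hr : ‖γ‖ / 2 < r) : gap τ γ ⊆ Metric.ball τ r := by
  rintro z ⟨t, ⟨ht1, ht2⟩, rfl⟩
  rw [mem_ball_iff_norm]
  have h : ‖τ + (t : ℂ) * γ / 2 - τ‖ = |t| * ‖γ‖ / 2 := by
    rw [add_sub_cancel_left, norm_div, norm_mul, Complex.norm_real]
    norm_num
  rw [h]
  have habs : |t| ≤ 1 := abs_le.mpr ⟨ht1, ht2⟩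
  nlinarith [abs_nonneg t, norm_nonneg γ]

set_option maxHeartbeats 1000000 in
/-- For `R > |γ|/2`, the counterclockwise contour integral of the standard root over the
circle of radius `R` centered at `τ` equals `iπγ²/4`. -/
theorem circleIntegral_stdRoot (τ γ : ℂ) (R : ℝ) (hR : ‖γ‖ / 2 < R) :
    (∮ z in C(τ, R), stdRoot τ γ z) = Complex.I * (Real.pi : ℂ) * γ ^ 2 / 4 := by
  have hR0 : 0 < R := lt_of_le_of_lt (by positivity) hR
  set T : ℂ := Complex.I * (Real.pi : ℂ) * γ ^ 2 / 4 with hT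
  set I0 : ℂ := ∮ z in C(τ, R), stdRoot τ γ z with hI0
  have key : ∀ R' : ℝ, R ≤ R' → ‖I0 - T‖ ≤ 2 * Real.pi * R' * (‖γ‖ ^ 4 / (32 * R' ^ 3)) := by
    intro R' hR'
    have hR'0 : 0 < R' := lt_of_lt_of_le hR0 hR'
    have hnotgap : ∀ z : ℂ, z ∉ Metric.ball τ R → z ∉ gap τ γ :=
      fun z hz hg => hz (gap_subset hR hg)
    have hsphere : ∀ z ∈ Metric.sphere τ R', z ∉ gap τ γ := by
      intro z hz
      apply hnotgap
      rw [Metric.mem_sphere] at hz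
      simp only [Metric.mem_ball, hz, not_lt]
      exact hR'
    have hcont : ContinuousOn (stdRoot τ γ) (Metric.sphere τ R') := fun z hz =>
      (stdRoot_differentiableAt (hsphere z hz)).continuousAt.continuousWithinAt
    have hint1 : CircleIntegrable (stdRoot τ γ) τ R' :=
      ContinuousOn.circleIntegrable hR'0.le hcont
    have hint2 : CircleIntegrable (fun z => τ - z) τ R' :=
      ContinuousOn.circleIntegrable hR'0.le
        ((continuous_const.sub continuous_id).continuousOn)
    have hint3 : CircleIntegrable (fun z => γ ^ 2 / (8 * (z - τ))) τ R' := by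
      apply ContinuousOn.circleIntegrable hR'0.le
      apply ContinuousOn.div continuousOn_const
        (continuousOn_const.mul ((continuous_id.sub continuous_const).continuousOn))
      intro z hz
      rw [Metric.mem_sphere] at hz
      have : z - τ ≠ 0 := by
        intro h
        rw [sub_eq_zero] at h
        rw [h] at hz
        simp at hz
        exact hR'0.ne' hz.symm  -- dist τ τ = 0 = R'
      simp [this]
    have p1 : (∮ z in C(τ, R'), stdRoot τ γ z) = I0 := by
      rw [hI0]
      apply circleIntegral_eq_of_differentiable_on_annulus_off_countable hR0 hR'
        Set.countable_empty
      · intro z hz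
        have : z ∉ gap τ γ := hnotgap z hz.2
        exact (stdRoot_differentiableAt this).continuousAt.continuousWithinAt
      · intro z hz
        exact stdRoot_differentiableAt
          (hnotgap z fun hb => hz.1.2 (Metric.ball_subset_closedBall hb))
    have p2 : (∮ z in C(τ, R'), (τ - z)) = 0 := by
      have h1 : (∮ z in C(τ, R'), (z - τ) ^ (1 : ℤ)) = 0 :=
        circleIntegral.integral_sub_zpow_of_ne (by decide) τ τ R'
      simp only [zpow_one] at h1
      calc (∮ z in C(τ, R'), (τ - z)) = ∮ z in C(τ, R'), (-1 : ℂ) • (z - τ) := by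
            congr 1; funext z; simp only [smul_eq_mul]; ring
        _ = (-1 : ℂ) • ∮ z in C(τ, R'), (z - τ) := circleIntegral.integral_smul _ _ _ _
        _ = 0 := by rw [h1, smul_zero]
    have p3 : (∮ z in C(τ, R'), γ ^ 2 / (8 * (z - τ))) = T := by
      have h1 : (∮ z in C(τ, R'), (z - τ)⁻¹) = 2 * Real.pi * Complex.I :=
        circleIntegral.integral_sub_inv_of_mem_ball (Metric.mem_ball_self hR'0)
      calc (∮ z in C(τ, R'), γ ^ 2 / (8 * (z - τ)))
          = ∮ z in C(τ, R'), (γ ^ 2 / 8) • (z - τ)⁻¹ := by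
            congr 1; funext z
            simp only [smul_eq_mul, div_eq_mul_inv, mul_inv]; ring
        _ = (γ ^ 2 / 8) • ∮ z in C(τ, R'), (z - τ)⁻¹ := circleIntegral.integral_smul _ _ _ _
        _ = T := by rw [h1, hT, smul_eq_mul]; ring
    have hint12 : CircleIntegrable (fun z => stdRoot τ γ z - (τ - z)) τ R' :=
      ContinuousOn.circleIntegrable hR'0.le
        (hcont.sub (continuous_const.sub continuous_id).continuousOn)
    have e1 := circleIntegral.integral_sub (c := τ) (R := R')
      (f := fun z => stdRoot τ γ z - (τ - z))
      (g := fun z => γ ^ 2 / (8 * (z - τ))) hint12 hint3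
    have e2 := circleIntegral.integral_sub (c := τ) (R := R')
      (f := fun z => stdRoot τ γ z) (g := fun z => τ - z) hint1 hint2
    have heq : I0 - T
        = ∮ z in C(τ, R'), (stdRoot τ γ z - (τ - z) - γ ^ 2 / (8 * (z - τ))) := by
      rw [e1, e2, p1, p2, p3]
      ring
    rw [heq]
    exact circleIntegral.norm_integral_le_of_norm_le_const hR'0.le
      (fun z hz => stdRoot_tail_bound hR'0 hz)
  have tend : Filter.Tendsto (fun R' : ℝ => 2 * Real.pi * R' * (‖γ‖ ^ 4 / (32 * R' ^ 3)))
      Filter.atTop (nhds 0) := by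
    have hcong : ∀ᶠ R' in Filter.atTop, 2 * Real.pi * R' * (‖γ‖ ^ 4 / (32 * R' ^ 3))
        = (Real.pi * ‖γ‖ ^ 4 / 16) * (R' ^ 2)⁻¹ := by
      filter_upwards [Filter.eventually_gt_atTop 0] with x hx
      field_simp
      ring
    rw [Filter.tendsto_congr' hcong]
    have h2 : Filter.Tendsto (fun R' : ℝ => (R' ^ 2)⁻¹) Filter.atTop (nhds 0) :=
      tendsto_inv_atTop_zero.comp (Filter.tendsto_pow_atTop two_ne_zero)
    simpa using h2.const_mul (Real.pi * ‖γ‖ ^ 4 / 16)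
  have hle : ‖I0 - T‖ ≤ 0 :=
    ge_of_tendsto tend (Filter.eventually_atTop.mpr ⟨R, key⟩)
  have : I0 - T = 0 := by
    have := le_antisymm hle (norm_nonneg _)
    rwa [norm_eq_zero] at this
  exact sub_eq_zero.mp this
end
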